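/- arXiv:1209.1362 — 3 statements merged into one kernel-verified Lean document; each statement's English description precedes it below -/
import Mathlib

section
/- Let G be a finite connected simple graph with n ≥ 2 vertices and m edges, and let k ≥ 2 be an integer. If m ≤ 3(n + k − 2) and n > 12(k − 2), then the bondage number satisfies b(G) ≤ 11. -/
/-- A finset `D` of vertices is a dominating set of `G` if every vertex not in `D`
is adjacent to some vertex in `D`. -/
def SimpleGraph.IsDominatingSet {V : Type*} (G : SimpleGraph V) (D : Finset V) : Prop :=
  ∀ v : V, v ∉ D → ∃ u ∈ D, G.Adj u v

/-- The domination number of `G`: the minimum cardinality of a dominating set. -/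
noncomputable def SimpleGraph.dominationNumber {V : Type*} [Fintype V]
    (G : SimpleGraph V) : ℕ :=
  sInf {k | ∃ D : Finset V, G.IsDominatingSet D ∧ D.card = k}

/-- The bondage number of `G`: the minimum cardinality of a set `B` of edges of `G`
whose removal increases the domination number. -/
noncomputable def SimpleGraph.bondageNumber {V : Type*} [Fintype V]
    (G : SimpleGraph V) : ℕ :=
  sInf {k | ∃ B : Finset (Sym2 V), ↑B ⊆ G.edgeSet ∧ B.card = k ∧
    G.dominationNumber < (G.deleteEdges ↑B).dominationNumber}

namespace SimpleGraph

variable {V : Type*} [Fintype V]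

lemma isDominatingSet_univ (G : SimpleGraph V) : G.IsDominatingSet Finset.univ :=
  fun v hv => absurd (Finset.mem_univ v) hv

lemma dominationNumber_le (G : SimpleGraph V) {D : Finset V} (hD : G.IsDominatingSet D) :
    G.dominationNumber ≤ D.card :=
  Nat.sInf_le ⟨D, hD, rfl⟩

lemma exists_min_dominatingSet (G : SimpleGraph V) :
    ∃ D : Finset V, G.IsDominatingSet D ∧ D.card = G.dominationNumber :=
  Nat.sInf_mem (⟨_, Finset.univ, G.isDominatingSet_univ, rfl⟩ :
    {k | ∃ D : Finset V, G.IsDominatingSet D ∧ D.card = k}.Nonempty)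

lemma bondageNumber_le (G : SimpleGraph V) {B : Finset (Sym2 V)} (hB : ↑B ⊆ G.edgeSet)
    (h : G.dominationNumber < (G.deleteEdges ↑B).dominationNumber) :
    G.bondageNumber ≤ B.card :=
  Nat.sInf_le ⟨B, hB, rfl, h⟩

variable [DecidableEq V]

/-- Bondage bound for adjacent vertices: remove all edges at `u` or `v`. -/
lemma bondage_le_of_adj (G : SimpleGraph V) [DecidableRel G.Adj] {u v : V}
    (h : G.Adj u v) :
    G.bondageNumber ≤ G.degree u + G.degree v - 1 := by
  classical
  set B := G.incidenceFinset u ∪ G.incidenceFinset v with hBdef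
  have hBsub : ↑B ⊆ G.edgeSet := by
    intro e he
    rcases Finset.mem_union.mp he with h' | h' <;>
      exact G.incidenceSet_subset _ ((G.mem_incidenceFinset _ _).mp h')
  have hinter : G.incidenceFinset u ∩ G.incidenceFinset v = {s(u, v)} := by
    ext e
    simp only [Finset.mem_inter, mem_incidenceFinset, Finset.mem_singleton]
    constructor
    · rintro ⟨h1, h2⟩
      have := G.incidenceSet_inter_incidenceSet_of_adj h
      have : e ∈ ({s(u, v)} : Set (Sym2 V)) := this ▸ Set.mem_inter h1 h2
      simpa using this
    · rintro rfl
      exact ⟨G.mk'_mem_incidenceSet_left_iff.mpr h, G.mk'_mem_incidenceSet_right_iff.mpr h⟩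
  have hBcard : B.card = G.degree u + G.degree v - 1 := by
    have h1 := Finset.card_union_add_card_inter (G.incidenceFinset u) (G.incidenceFinset v)
    rw [hinter, Finset.card_singleton, G.card_incidenceFinset_eq_degree,
      G.card_incidenceFinset_eq_degree, ← hBdef] at h1
    have hd : 0 < G.degree u := G.degree_pos_iff_exists_adj u |>.mpr ⟨v, h⟩
    omega
  set G' := G.deleteEdges ↑B with hG'def
  have hu_iso : ∀ y, ¬ G'.Adj y u := by
    intro y hy
    rw [hG'def, deleteEdges_adj] at hy
    exact hy.2 (by
      exact_mod_cast Finset.mem_union_left _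
        ((G.mem_incidenceFinset _ _).mpr (G.mk'_mem_incidenceSet_right_iff.mpr hy.1)))
  have hv_iso : ∀ y, ¬ G'.Adj y v := by
    intro y hy
    rw [hG'def, deleteEdges_adj] at hy
    exact hy.2 (by
      exact_mod_cast Finset.mem_union_right _
        ((G.mem_incidenceFinset _ _).mpr (G.mk'_mem_incidenceSet_right_iff.mpr hy.1)))
  obtain ⟨D, hD, hDcard⟩ := G'.exists_min_dominatingSet
  have huD : u ∈ D := by
    by_contra hu
    obtain ⟨y, hyD, hy⟩ := hD u hu
    exact hu_iso y hy
  have hvD : v ∈ D := by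
    by_contra hv
    obtain ⟨y, hyD, hy⟩ := hD v hv
    exact hv_iso y hy
  have hD' : G.IsDominatingSet (D.erase v) := by
    intro x hx
    by_cases hxv : x = v
    · subst hxv
      exact ⟨u, Finset.mem_erase.mpr ⟨h.ne, huD⟩, h⟩
    · have hxD : x ∉ D := fun hxD => hx (Finset.mem_erase.mpr ⟨hxv, hxD⟩)
      obtain ⟨y, hyD, hy⟩ := hD x hxD
      have hyv : y ≠ v := by rintro rfl; exact hv_iso x hy.symm
      have : G.Adj y x := by
        rw [hG'def, deleteEdges_adj] at hy; exact hy.1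
      exact ⟨y, Finset.mem_erase.mpr ⟨hyv, hyD⟩, this⟩
  have hle : G.dominationNumber ≤ D.card - 1 := by
    have := G.dominationNumber_le hD'
    rwa [Finset.card_erase_of_mem hvD] at this
  have hpos : 0 < D.card := Finset.card_pos.mpr ⟨v, hvD⟩
  have hkey : G.dominationNumber < G'.dominationNumber := by omega
  have := G.bondageNumber_le hBsub hkey
  omega

/-- Bondage bound for vertices at distance two: remove all edges at `u`,
and all edges at `v` except the edge to the common neighbor `w`. -/
lemma bondage_le_of_dist_two (G : SimpleGraph V) [DecidableRel G.Adj] {u w v : V}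
    (hnadj : ¬ G.Adj u v) (hne : u ≠ v) (h1 : G.Adj u w) (h2 : G.Adj w v) :
    G.bondageNumber ≤ G.degree u + G.degree v - 1 := by
  classical
  set B := (G.incidenceFinset u ∪ G.incidenceFinset v).erase s(w, v) with hBdef
  have hBsub : ↑B ⊆ G.edgeSet := by
    intro e he
    have he' : e ∈ G.incidenceFinset u ∪ G.incidenceFinset v :=
      Finset.mem_of_mem_erase (by exact_mod_cast he)
    rcases Finset.mem_union.mp he' with h' | h' <;>
      exact G.incidenceSet_subset _ ((G.mem_incidenceFinset _ _).mp h')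
  have hdisj : Disjoint (G.incidenceFinset u) (G.incidenceFinset v) := by
    rw [Finset.disjoint_left]
    intro e heu hev
    have : e ∈ G.incidenceSet u ∩ G.incidenceSet v :=
      ⟨(G.mem_incidenceFinset _ _).mp heu, (G.mem_incidenceFinset _ _).mp hev⟩
    rw [G.incidenceSet_inter_incidenceSet_of_not_adj hnadj hne] at this
    exact this
  have hwv_mem : s(w, v) ∈ G.incidenceFinset u ∪ G.incidenceFinset v :=
    Finset.mem_union_right _ ((G.mem_incidenceFinset _ _).mpr
      (G.mk'_mem_incidenceSet_right_iff.mpr h2))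
  have hBcard : B.card = G.degree u + G.degree v - 1 := by
    rw [hBdef, Finset.card_erase_of_mem hwv_mem, Finset.card_union_of_disjoint hdisj,
      G.card_incidenceFinset_eq_degree, G.card_incidenceFinset_eq_degree]
  set G' := G.deleteEdges ↑B with hG'def
  have hu_iso : ∀ y, ¬ G'.Adj y u := by
    intro y hy
    rw [hG'def, deleteEdges_adj] at hy
    refine hy.2 ?_
    have hne' : s(y, u) ≠ s(w, v) := by
      intro heq
      rcases Sym2.eq_iff.mp heq with ⟨-, h4⟩ | ⟨-, h4⟩
      · exact hne h4
      · exact h1.ne h4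
    exact_mod_cast Finset.mem_erase.mpr ⟨hne', Finset.mem_union_left _
      ((G.mem_incidenceFinset _ _).mpr (G.mk'_mem_incidenceSet_right_iff.mpr hy.1))⟩
  have hv_nbr : ∀ y, G'.Adj y v → y = w := by
    intro y hy
    rw [hG'def, deleteEdges_adj] at hy
    by_contra hyw
    refine hy.2 ?_
    have hne' : s(y, v) ≠ s(w, v) := by
      intro heq
      rcases Sym2.eq_iff.mp heq with ⟨h3, -⟩ | ⟨h3, -⟩
      · exact hyw h3
      · exact G.irrefl (h3 ▸ hy.1)
    exact_mod_cast Finset.mem_erase.mpr ⟨hne', Finset.mem_union_right _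
      ((G.mem_incidenceFinset _ _).mpr (G.mk'_mem_incidenceSet_right_iff.mpr hy.1))⟩
  obtain ⟨D, hD, hDcard⟩ := G'.exists_min_dominatingSet
  have huD : u ∈ D := by
    by_contra hu
    obtain ⟨y, hyD, hy⟩ := hD u hu
    exact hu_iso y hy
  have hvw : v ∈ D ∨ w ∈ D := by
    by_cases hv : v ∈ D
    · exact Or.inl hv
    · obtain ⟨y, hyD, hy⟩ := hD v hv
      exact Or.inr ((hv_nbr y hy) ▸ hyD)
  set D' := insert w ((D.erase u).erase v) with hD'def
  have hwu : w ≠ u := h1.ne'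
  have hwv : w ≠ v := h2.ne
  have hcard' : D'.card < D.card := by
    have e1 : (D.erase u).card = D.card - 1 := Finset.card_erase_of_mem huD
    have h1' : 1 ≤ D.card := Finset.card_pos.mpr ⟨u, huD⟩
    rcases hvw with hv | hw
    · have hv' : v ∈ D.erase u := Finset.mem_erase.mpr ⟨hne.symm, hv⟩
      have e2 : ((D.erase u).erase v).card = (D.erase u).card - 1 :=
        Finset.card_erase_of_mem hv'
      have h2' : 1 ≤ (D.erase u).card := Finset.card_pos.mpr ⟨v, hv'⟩
      have hins : D'.card ≤ ((D.erase u).erase v).card + 1 := by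
        rw [hD'def]; exact Finset.card_insert_le _ _
      omega
    · have hw' : w ∈ (D.erase u).erase v :=
        Finset.mem_erase.mpr ⟨hwv, Finset.mem_erase.mpr ⟨hwu, hw⟩⟩
      have : D' = (D.erase u).erase v := Finset.insert_eq_self.mpr hw'
      rw [this]
      calc ((D.erase u).erase v).card ≤ (D.erase u).card :=
            Finset.card_le_card (Finset.erase_subset _ _)
        _ < D.card := by omega
  have hD' : G.IsDominatingSet D' := by
    intro x hx
    have hwD' : w ∈ D' := Finset.mem_insert_self _ _
    by_cases hxu : x = u
    · exact ⟨w, hwD', hxu ▸ h1.symm⟩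
    by_cases hxv : x = v
    · exact ⟨w, hwD', hxv ▸ h2⟩
    have hxD : x ∉ D := by
      intro hxD
      exact hx (Finset.mem_insert_of_mem
        (Finset.mem_erase.mpr ⟨hxv, Finset.mem_erase.mpr ⟨hxu, hxD⟩⟩))
    obtain ⟨y, hyD, hy⟩ := hD x hxD
    have hyu : y ≠ u := by rintro rfl; exact hu_iso x hy.symm
    have hyv : y ≠ v := by
      rintro rfl
      have hxw : x = w := hv_nbr x hy.symm
      exact hx (by rw [hxw]; exact hwD')
    have : G.Adj y x := by rw [hG'def, deleteEdges_adj] at hy; exact hy.1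
    exact ⟨y, Finset.mem_insert_of_mem
      (Finset.mem_erase.mpr ⟨hyv, Finset.mem_erase.mpr ⟨hyu, hyD⟩⟩), this⟩
  have hle : G.dominationNumber ≤ D'.card := G.dominationNumber_le hD'
  have hkey : G.dominationNumber < G'.dominationNumber := by omega
  have := G.bondageNumber_le hBsub hkey
  omega

/-- If every pair of distinct vertices at distance at most two has degree sum at
least 13, then `13 n ≤ 4 m`.  Contrapositive form. -/
lemma exists_good_pair (G : SimpleGraph V) [DecidableRel G.Adj]
    (hdeg : ∀ v : V, 0 < G.degree v)
    (hlt : 4 * G.edgeFinset.card < 13 * Fintype.card V) :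
    ∃ u v : V, u ≠ v ∧ (G.Adj u v ∨ ∃ w, G.Adj u w ∧ G.Adj w v) ∧
      G.degree u + G.degree v ≤ 12 := by
  classical
  by_contra hbad
  push_neg at hbad
  -- hbad : ∀ u v, u ≠ v → (Adj ∨ dist2) → 12 < deg u + deg v
  set A : Finset V := Finset.univ.filter (fun a => G.degree a ≤ 6) with hAdef
  set C : V → Finset V := fun a => insert a (G.neighborFinset a) with hCdef
  have hmemA : ∀ a ∈ A, G.degree a ≤ 6 := by
    intro a ha; exact (Finset.mem_filter.mp ha).2
  have hpair : ∀ a ∈ A, ∀ b ∈ A, a ≠ b → Disjoint (C a) (C b) := by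
    intro a ha b hb hab
    rw [Finset.disjoint_left]
    intro x hxa hxb
    have hxa' : x = a ∨ G.Adj a x := by
      rcases Finset.mem_insert.mp hxa with h | h
      · exact Or.inl h
      · exact Or.inr ((G.mem_neighborFinset a x).mp h)
    have hxb' : x = b ∨ G.Adj b x := by
      rcases Finset.mem_insert.mp hxb with h | h
      · exact Or.inl h
      · exact Or.inr ((G.mem_neighborFinset b x).mp h)
    have h13 : 12 < G.degree a + G.degree b := by
      rcases hxa' with heq | hax
      · rcases hxb' with heq2 | hbx
        · exact absurd (heq.symm.trans heq2) hab
        · exact hbad a b hab (Or.inl (heq ▸ hbx).symm)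
      · rcases hxb' with heq2 | hbx
        · exact hbad a b hab (Or.inl (heq2 ▸ hax))
        · exact hbad a b hab (Or.inr ⟨x, hax, hbx.symm⟩)
    have := hmemA a ha
    have := hmemA b hb
    omega
  have hpiece : ∀ a ∈ A, 13 * (C a).card ≤ ∑ x ∈ C a, 2 * G.degree x := by
    intro a ha
    have hna : a ∉ G.neighborFinset a := by
      rw [G.mem_neighborFinset]; exact G.irrefl
    have hccard : (C a).card = G.degree a + 1 := by
      simp only [hCdef]
      rw [Finset.card_insert_of_notMem hna, G.card_neighborFinset_eq_degree]
    have hsum : ∑ x ∈ C a, 2 * G.degree x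
        = 2 * G.degree a + ∑ b ∈ G.neighborFinset a, 2 * G.degree b := by
      simp only [hCdef]
      rw [Finset.sum_insert hna]
    have hterm : ∀ b ∈ G.neighborFinset a, 26 - 2 * G.degree a ≤ 2 * G.degree b := by
      intro b hb
      have hadj : G.Adj a b := (G.mem_neighborFinset a b).mp hb
      have := hbad a b hadj.ne (Or.inl hadj)
      omega
    have hsum2 : (G.degree a) * (26 - 2 * G.degree a)
        ≤ ∑ b ∈ G.neighborFinset a, 2 * G.degree b := by
      calc (G.degree a) * (26 - 2 * G.degree a)
          = ∑ _b ∈ G.neighborFinset a, (26 - 2 * G.degree a) := by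
            rw [Finset.sum_const, smul_eq_mul]; rfl
        _ ≤ ∑ b ∈ G.neighborFinset a, 2 * G.degree b := Finset.sum_le_sum hterm
    have hd1 : 1 ≤ G.degree a := hdeg a
    have hd6 : G.degree a ≤ 6 := hmemA a ha
    have harith : 13 * (G.degree a + 1)
        ≤ 2 * G.degree a + (G.degree a) * (26 - 2 * G.degree a) := by
      set d := G.degree a
      interval_cases d <;> norm_num
    rw [hccard, hsum]
    omega
  set U : Finset V := A.biUnion C with hUdef
  have hrest : ∀ x ∈ Finset.univ \ U, 13 ≤ 2 * G.degree x := by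
    intro x hx
    have hxU : x ∉ U := (Finset.mem_sdiff.mp hx).2
    have hxA : x ∉ A := by
      intro hxA
      exact hxU (Finset.mem_biUnion.mpr ⟨x, hxA, Finset.mem_insert_self _ _⟩)
    have : ¬ G.degree x ≤ 6 := by
      intro h6
      exact hxA (Finset.mem_filter.mpr ⟨Finset.mem_univ x, h6⟩)
    omega
  have hUsum : 13 * U.card ≤ ∑ x ∈ U, 2 * G.degree x := by
    rw [hUdef, Finset.sum_biUnion hpair, Finset.card_biUnion hpair, Finset.mul_sum]
    exact Finset.sum_le_sum hpiece
  have hRsum : 13 * (Finset.univ \ U).card ≤ ∑ x ∈ Finset.univ \ U, 2 * G.degree x := by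
    calc 13 * (Finset.univ \ U).card = ∑ _x ∈ Finset.univ \ U, 13 := by
          rw [Finset.sum_const, smul_eq_mul, mul_comm]
      _ ≤ _ := Finset.sum_le_sum hrest
  have hsplit : ∑ x ∈ Finset.univ \ U, 2 * G.degree x + ∑ x ∈ U, 2 * G.degree x
      = ∑ x : V, 2 * G.degree x :=
    Finset.sum_sdiff (Finset.subset_univ U)
  have hcards : (Finset.univ \ U).card + U.card = Fintype.card V := by
    have := Finset.card_sdiff_of_subset (Finset.subset_univ U)
    have := Finset.card_le_card (Finset.subset_univ U)
    simp only [Finset.card_univ] at *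
    omega
  have htotal : ∑ x : V, 2 * G.degree x = 4 * G.edgeFinset.card := by
    rw [← Finset.mul_sum, G.sum_degrees_eq_twice_card_edges]; ring
  omega

end SimpleGraph

theorem stmt_10 {V : Type*} [Fintype V] [DecidableEq V] (G : SimpleGraph V)
    [DecidableRel G.Adj] (hconn : G.Connected) (hn : 2 ≤ Fintype.card V)
    (k : ℕ) (hk : 2 ≤ k)
    (hm : G.edgeFinset.card ≤ 3 * (Fintype.card V + k - 2))
    (hbig : 12 * (k - 2) < Fintype.card V) :
    G.bondageNumber ≤ 11 := by
  have hdeg : ∀ v : V, 0 < G.degree v := by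
    intro v
    obtain ⟨u, hu⟩ := Fintype.exists_ne_of_one_lt_card (by omega) v
    obtain ⟨p⟩ := hconn.preconnected v u
    rw [G.degree_pos_iff_exists_adj]
    cases p with
    | nil => exact absurd rfl hu
    | cons h q => exact ⟨_, h⟩
  have hlt : 4 * G.edgeFinset.card < 13 * Fintype.card V := by
    have h1 : Fintype.card V + k - 2 = Fintype.card V + (k - 2) := by omega
    rw [h1] at hm
    omega
  obtain ⟨u, v, hne, hpath, hsum⟩ := G.exists_good_pair hdeg hlt
  have hb : G.bondageNumber ≤ G.degree u + G.degree v - 1 := by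
    rcases hpath with hadj | ⟨w, h1, h2⟩
    · exact G.bondage_le_of_adj hadj
    · by_cases hadj : G.Adj u v
      · exact G.bondage_le_of_adj hadj
      · exact G.bondage_le_of_dist_two hadj hne h1 h2
  omega
end

section
/- Let G be a finite connected simple triangle-free graph with n ≥ 2 vertices and m edges, and let χ be an integer. If m ≤ 2(n − χ), then the bondage number satisfies b(G) ≤ 7 − 8χ/n, i.e. n·(b(G) + 1) ≤ 8(n − χ). -/
set_option linter.unusedSectionVars false

namespace Aux
open SimpleGraph Finset

variable {V : Type*} [Fintype V] [DecidableEq V]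

lemma dom_univ (G : SimpleGraph V) : G.IsDominatingSet Finset.univ :=
  fun v hv => absurd (Finset.mem_univ v) hv

lemma domSet_nonempty (G : SimpleGraph V) :
    {k | ∃ D : Finset V, G.IsDominatingSet D ∧ D.card = k}.Nonempty :=
  ⟨_, Finset.univ, dom_univ G, rfl⟩

lemma exists_min_dom (G : SimpleGraph V) :
    ∃ D : Finset V, G.IsDominatingSet D ∧ D.card = G.dominationNumber :=
  Nat.sInf_mem (domSet_nonempty G)

lemma domNum_le (G : SimpleGraph V) {D : Finset V} (hD : G.IsDominatingSet D) :
    G.dominationNumber ≤ D.card :=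
  Nat.sInf_le ⟨D, hD, rfl⟩

lemma dom_mono {G H : SimpleGraph V} (h : H ≤ G) {D : Finset V}
    (hD : H.IsDominatingSet D) : G.IsDominatingSet D :=
  fun v hv => by obtain ⟨u, hu, hadj⟩ := hD v hv; exact ⟨u, hu, h hadj⟩

lemma domNum_deleteEdges_ge (G : SimpleGraph V) (s : Set (Sym2 V)) :
    G.dominationNumber ≤ (G.deleteEdges s).dominationNumber := by
  obtain ⟨D, hD, hc⟩ := exists_min_dom (G.deleteEdges s)
  rw [← hc]
  exact domNum_le G (dom_mono (G.deleteEdges_le s) hD)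

lemma mem_of_isolated {G : SimpleGraph V} {D : Finset V} (hD : G.IsDominatingSet D)
    {u : V} (h : ∀ x, ¬ G.Adj x u) : u ∈ D := by
  by_contra hu
  obtain ⟨y, _, hadj⟩ := hD u hu
  exact h y hadj

lemma bondage_mem (G : SimpleGraph V) [DecidableRel G.Adj] {B : Finset (Sym2 V)}
    (hsub : ↑B ⊆ G.edgeSet)
    (hlt : G.dominationNumber < (G.deleteEdges ↑B).dominationNumber) :
    G.bondageNumber ≤ B.card :=
  Nat.sInf_le ⟨B, hsub, rfl, hlt⟩

lemma bondage_le_adj (G : SimpleGraph V) [DecidableRel G.Adj] {u v : V}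
    (h : G.Adj u v) : G.bondageNumber ≤ G.degree u + G.degree v - 1 := by
  classical
  set B : Finset (Sym2 V) := G.incidenceFinset u ∪ G.incidenceFinset v with hB
  have hsub : ↑B ⊆ G.edgeSet := by
    intro e he
    simp only [hB, coe_union, Set.mem_union, mem_coe, mem_incidenceFinset] at he
    exact he.elim (fun h => h.1) (fun h => h.1)
  have hinter : G.incidenceFinset u ∩ G.incidenceFinset v = {s(u, v)} := by
    ext e
    simp only [mem_inter, mem_incidenceFinset, mem_singleton]
    constructor
    · rintro ⟨⟨he, hu⟩, ⟨_, hv⟩⟩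
      exact ((Sym2.mem_and_mem_iff h.ne).mp ⟨hu, hv⟩)
    · rintro rfl
      exact ⟨⟨h, Sym2.mem_mk_left _ _⟩, ⟨h, Sym2.mem_mk_right _ _⟩⟩
  have hcard : B.card + 1 = G.degree u + G.degree v := by
    rw [hB, ← G.card_incidenceFinset_eq_degree u, ← G.card_incidenceFinset_eq_degree v,
      ← card_singleton (s(u,v)), ← hinter]
    exact Finset.card_union_add_card_inter _ _
  -- key: domination number strictly increases
  have hkey : G.dominationNumber < (G.deleteEdges ↑B).dominationNumber := by
    rcases lt_or_eq_of_le (domNum_deleteEdges_ge G ↑B) with hlt | heq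
    · exact hlt
    · exfalso
      set G' := G.deleteEdges (↑B : Set (Sym2 V)) with hG'
      obtain ⟨D, hD, hDc⟩ := exists_min_dom G'
      have hiso : ∀ w x, w = u ∨ w = v → ¬ G'.Adj x w := by
        rintro w x hw hadj
        rw [hG', deleteEdges_adj] at hadj
        refine hadj.2 ?_
        simp only [hB, coe_union, Set.mem_union, mem_coe, mem_incidenceFinset]
        rcases hw with rfl | rfl
        · exact Or.inl ⟨hadj.1.symm.symm, Sym2.mem_mk_right _ _⟩
        · exact Or.inr ⟨hadj.1.symm.symm, Sym2.mem_mk_right _ _⟩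
      have hu : u ∈ D := mem_of_isolated hD (fun x => hiso u x (Or.inl rfl))
      have hv : v ∈ D := mem_of_isolated hD (fun x => hiso v x (Or.inr rfl))
      have hdom : G.IsDominatingSet (D.erase v) := by
        intro x hx
        by_cases hxv : x = v
        · exact ⟨u, Finset.mem_erase.mpr ⟨h.ne, hu⟩, hxv ▸ h⟩
        · have hxD : x ∉ D := fun hxD => hx (Finset.mem_erase.mpr ⟨hxv, hxD⟩)
          obtain ⟨y, hy, hadj⟩ := hD x hxD
          have hyv : y ≠ v := fun hyv => hiso y x (Or.inr hyv) hadj.symm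
          exact ⟨y, Finset.mem_erase.mpr ⟨hyv, hy⟩, G.deleteEdges_le _ hadj⟩
      have : G.dominationNumber ≤ (D.erase v).card := domNum_le G hdom
      rw [Finset.card_erase_of_mem hv, hDc, ← heq] at this
      have hpos : 0 < G.dominationNumber := by
        rcases Nat.eq_zero_or_pos G.dominationNumber with h0 | h
        · rw [heq, ← hDc] at h0
          exact absurd (Finset.card_eq_zero.mp h0 ▸ hv) (Finset.notMem_empty v)
        · exact h
      omega
  have := bondage_mem G hsub hkey
  omega

lemma bondage_le_dist2 (G : SimpleGraph V) [DecidableRel G.Adj] {u v w : V}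
    (huv : u ≠ v) (hnadj : ¬ G.Adj u v) (h1 : G.Adj u w) (h2 : G.Adj v w) :
    G.bondageNumber ≤ G.degree u + G.degree v - 1 := by
  classical
  set B : Finset (Sym2 V) := G.incidenceFinset u ∪ (G.incidenceFinset v).erase s(v, w)
    with hB
  have hsub : ↑B ⊆ G.edgeSet := by
    intro e he
    simp only [hB, coe_union, Set.mem_union, mem_coe, mem_incidenceFinset,
      mem_erase] at he
    exact he.elim (fun h => h.1) (fun h => h.2.1)
  have hdisj : Disjoint (G.incidenceFinset u) ((G.incidenceFinset v).erase s(v, w)) := by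
    rw [Finset.disjoint_left]
    intro e heu hev
    rw [mem_incidenceFinset] at heu
    have hev' := Finset.mem_of_mem_erase hev
    rw [mem_incidenceFinset] at hev'
    have : e = s(u, v) := (Sym2.mem_and_mem_iff huv).mp ⟨heu.2, hev'.2⟩
    exact hnadj (G.mem_edgeSet.mp (this ▸ heu.1))
  have hcard : B.card + 1 = G.degree u + G.degree v := by
    rw [hB, Finset.card_union_of_disjoint hdisj,
      Finset.card_erase_of_mem (by rw [mem_incidenceFinset]; exact ⟨h2, Sym2.mem_mk_left _ _⟩),
      G.card_incidenceFinset_eq_degree u, G.card_incidenceFinset_eq_degree v]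
    have : 1 ≤ G.degree v := by
      rw [← G.card_incidenceFinset_eq_degree v]
      exact Finset.card_pos.mpr ⟨s(v,w), by
        rw [mem_incidenceFinset]; exact ⟨h2, Sym2.mem_mk_left _ _⟩⟩
    omega
  have hkey : G.dominationNumber < (G.deleteEdges ↑B).dominationNumber := by
    rcases lt_or_eq_of_le (domNum_deleteEdges_ge G ↑B) with hlt | heq
    · exact hlt
    · exfalso
      set G' := G.deleteEdges (↑B : Set (Sym2 V)) with hG'
      obtain ⟨D, hD, hDc⟩ := exists_min_dom G'
      have hisoU : ∀ x, ¬ G'.Adj x u := by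
        intro x hadj
        rw [hG', deleteEdges_adj] at hadj
        refine hadj.2 ?_
        simp only [hB, coe_union, Set.mem_union, mem_coe, mem_incidenceFinset]
        exact Or.inl ⟨hadj.1, Sym2.mem_mk_right _ _⟩
      have hvw : ∀ x, G'.Adj x v → x = w := by
        intro x hadj
        rw [hG', deleteEdges_adj] at hadj
        by_contra hxw
        refine hadj.2 ?_
        simp only [hB, coe_union, Set.mem_union, mem_coe, Finset.mem_erase,
          mem_incidenceFinset]
        refine Or.inr ⟨?_, hadj.1, Sym2.mem_mk_right _ _⟩
        intro hecq
        rw [Sym2.eq_iff] at hecq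
        rcases hecq with ⟨rfl, rfl⟩ | ⟨hxw', _⟩
        · exact hadj.1.ne' rfl
        · exact hxw hxw'
      have hu : u ∈ D := mem_of_isolated hD hisoU
      by_cases hvD : v ∈ D
      · -- replace u, v by w
        have hwu : w ≠ u := h1.ne'
        have hwv : w ≠ v := h2.ne'
        have hdom : G.IsDominatingSet (insert w ((D.erase u).erase v)) := by
          intro x hx
          have hxw : x ≠ w := fun hxw => hx (hxw ▸ Finset.mem_insert_self _ _)
          by_cases hxu : x = u
          · exact ⟨w, Finset.mem_insert_self _ _, hxu ▸ h1.symm⟩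
          by_cases hxv : x = v
          · exact ⟨w, Finset.mem_insert_self _ _, hxv ▸ h2.symm⟩
          have hxD : x ∉ D := by
            intro hxD
            exact hx (Finset.mem_insert_of_mem (Finset.mem_erase.mpr ⟨hxv,
              Finset.mem_erase.mpr ⟨hxu, hxD⟩⟩))
          obtain ⟨y, hy, hadj⟩ := hD x hxD
          have hyu : y ≠ u := fun hyu => hisoU x (hyu ▸ hadj).symm
          have hyv : y ≠ v := by
            intro hyv
            exact hxw (hvw x (hyv ▸ hadj).symm)
          exact ⟨y, Finset.mem_insert_of_mem (Finset.mem_erase.mpr ⟨hyv,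
            Finset.mem_erase.mpr ⟨hyu, hy⟩⟩), G.deleteEdges_le _ hadj⟩
        have hle : G.dominationNumber ≤ (insert w ((D.erase u).erase v)).card :=
          domNum_le G hdom
        have hc1 : ((D.erase u).erase v).card = D.card - 2 := by
          rw [Finset.card_erase_of_mem (Finset.mem_erase.mpr ⟨huv.symm, hvD⟩),
            Finset.card_erase_of_mem hu]
          omega
        have hc2 : (insert w ((D.erase u).erase v)).card ≤ D.card - 1 := by
          have := Finset.card_insert_le w ((D.erase u).erase v)
          have h2D : 2 ≤ D.card := Finset.one_lt_card.mpr ⟨u, hu, v, hvD, huv⟩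
          omega
        have h2D : 2 ≤ D.card := Finset.one_lt_card.mpr ⟨u, hu, v, hvD, huv⟩
        rw [hDc, ← heq] at *
        omega
      · -- v not in D, so w in D; remove u
        have hwD : w ∈ D := by
          obtain ⟨y, hy, hadj⟩ := hD v hvD
          rwa [hvw y hadj] at hy
        have hdom : G.IsDominatingSet (D.erase u) := by
          intro x hx
          by_cases hxu : x = u
          · exact ⟨w, Finset.mem_erase.mpr ⟨h1.ne', hwD⟩, hxu ▸ h1.symm⟩
          · have hxD : x ∉ D := fun hxD => hx (Finset.mem_erase.mpr ⟨hxu, hxD⟩)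
            obtain ⟨y, hy, hadj⟩ := hD x hxD
            have hyu : y ≠ u := fun hyu => hisoU x (hyu ▸ hadj).symm
            exact ⟨y, Finset.mem_erase.mpr ⟨hyu, hy⟩, G.deleteEdges_le _ hadj⟩
        have hle : G.dominationNumber ≤ (D.erase u).card := domNum_le G hdom
        rw [Finset.card_erase_of_mem hu, hDc, ← heq] at hle
        have hpos : 0 < G.dominationNumber := by
          rcases Nat.eq_zero_or_pos G.dominationNumber with h0 | h
          · rw [heq, ← hDc] at h0
            exact absurd (Finset.card_eq_zero.mp h0 ▸ hu) (Finset.notMem_empty u)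
          · exact h
        omega
  have := bondage_mem G hsub hkey
  omega


lemma exists_neighbor (G : SimpleGraph V) (hconn : G.Connected)
    (hn : 2 ≤ Fintype.card V) (v : V) : ∃ u, G.Adj v u := by
  obtain ⟨a, b, hab⟩ := Fintype.exists_pair_of_one_lt_card (α := V) (by omega)
  have hne : ∃ w, w ≠ v := by
    by_cases h : a = v
    · exact ⟨b, fun hb => hab (h.trans hb.symm)⟩
    · exact ⟨a, h⟩
  obtain ⟨w, hw⟩ := hne
  obtain ⟨p⟩ := hconn.preconnected v w
  cases p with
  | nil => exact absurd rfl hw.symm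
  | cons h _ => exact ⟨_, h⟩

lemma exists_edge (G : SimpleGraph V) (hconn : G.Connected)
    (hn : 2 ≤ Fintype.card V) : ∃ u v, G.Adj u v := by
  obtain ⟨a, b, hab⟩ := Fintype.exists_pair_of_one_lt_card (α := V) (by omega)
  obtain ⟨u, hu⟩ := exists_neighbor G hconn hn a
  exact ⟨a, u, hu⟩

lemma exists_good_pair (G : SimpleGraph V) [DecidableRel G.Adj]
    (hconn : G.Connected) (hn : 2 ≤ Fintype.card V) :
    ∃ u v : V, u ≠ v ∧ (G.Adj u v ∨ ∃ w, G.Adj u w ∧ G.Adj v w) ∧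
      (Fintype.card V : ℤ) * (G.degree u + G.degree v) ≤ 4 * G.edgeFinset.card := by
  classical
  by_contra hcon
  push_neg at hcon
  set n : ℤ := (Fintype.card V : ℤ) with hn'
  set m : ℤ := (G.edgeFinset.card : ℤ) with hm'
  have H : ∀ u v : V, u ≠ v → (G.Adj u v ∨ ∃ w, G.Adj u w ∧ G.Adj v w) →
      4 * m + 1 ≤ n * ((G.degree u : ℤ) + (G.degree v : ℤ)) := by
    intro u v h1 h2
    have := hcon u v h1 h2
    push_cast at this ⊢
    omega
  have hdegpos : ∀ v : V, 1 ≤ (G.degree v : ℤ) := by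
    intro v
    obtain ⟨u, hu⟩ := exists_neighbor G hconn hn v
    have : 0 < G.degree v := G.degree_pos_iff_exists_adj v |>.mpr ⟨u, hu⟩
    exact_mod_cast this
  have hsum : ∑ x : V, ((G.degree x : ℤ)) = 2 * m := by
    rw [hm']
    exact_mod_cast congrArg (Nat.cast : ℕ → ℤ) G.sum_degrees_eq_twice_card_edges
  set L : Finset V := Finset.univ.filter (fun v => n * (G.degree v : ℤ) ≤ 2 * m) with hL
  have hmemL : ∀ v, v ∈ L ↔ n * (G.degree v : ℤ) ≤ 2 * m := by
    intro v; simp [hL]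
  have hnotL : ∀ v, v ∉ L → 2 * m + 1 ≤ n * (G.degree v : ℤ) := by
    intro v hv
    have := (not_iff_not.mpr (hmemL v)).mp hv
    omega
  -- L is nonempty
  have hLne : L.Nonempty := by
    by_contra hLe
    rw [Finset.not_nonempty_iff_eq_empty] at hLe
    have hall : ∀ v : V, v ∉ L := fun v hv => by rw [hLe] at hv; exact absurd hv (Finset.notMem_empty v)
    have h1 : ∑ x : V, (2 * m + 1) ≤ ∑ x : V, n * (G.degree x : ℤ) :=
      Finset.sum_le_sum (fun x _ => hnotL x (hall x))
    rw [Finset.sum_const, Finset.card_univ, ← Finset.mul_sum, hsum] at h1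
    have hn2 : (2 : ℤ) ≤ n := by rw [hn']; exact_mod_cast hn
    have hm0 : 0 ≤ m := by positivity
    simp only [nsmul_eq_mul] at h1
    rw [← hn'] at h1
    nlinarith
  -- low vertices are pairwise "far"
  have hLL : ∀ u ∈ L, ∀ v ∈ L, u ≠ v →
      ¬ G.Adj u v ∧ ∀ w, ¬ (G.Adj u w ∧ G.Adj v w) := by
    intro u hu v hv huv
    have hub := (hmemL u).mp hu
    have hvb := (hmemL v).mp hv
    constructor
    · intro hadj
      have := H u v huv (Or.inl hadj)
      nlinarith [this]
    · intro w hw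
      have := H u v huv (Or.inr ⟨w, hw⟩)
      nlinarith [this]
  set N : V → Finset V := fun v => G.neighborFinset v with hN
  set T : Finset V := L.biUnion N with hT
  have hdisjLT : Disjoint L T := by
    rw [Finset.disjoint_left]
    intro u hu hut
    rw [hT, Finset.mem_biUnion] at hut
    obtain ⟨v, hv, huN⟩ := hut
    rw [hN] at huN
    simp only [SimpleGraph.mem_neighborFinset] at huN
    have huv : u ≠ v := huN.ne'
    exact (hLL u hu v hv huv).1 huN.symm
  have hpd : (L : Set V).PairwiseDisjoint N := by
    intro a ha b hb hab
    rw [Function.onFun, Finset.disjoint_left]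
    intro x hxa hxb
    rw [hN] at hxa hxb
    simp only [SimpleGraph.mem_neighborFinset] at hxa hxb
    exact (hLL a ha b hb hab).2 x ⟨hxa, hxb⟩
  set S : Finset V := L ∪ T with hS
  set l : ℤ := (L.card : ℤ) with hl
  set s : ℤ := ∑ v ∈ L, (G.degree v : ℤ) with hs
  -- cardinalities
  have hTcard : (T.card : ℤ) = s := by
    rw [hT, Finset.card_biUnion (fun a ha b hb hab => hpd ha hb hab)]
    rw [hs]
    push_cast
    refine Finset.sum_congr rfl (fun v _ => ?_)
    rw [hN]
    exact_mod_cast congrArg (Nat.cast : ℕ → ℤ) (G.card_neighborFinset_eq_degree v)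
  have hScard : (S.card : ℤ) = l + s := by
    have h1 : S.card = L.card + T.card := by
      rw [hS]; exact Finset.card_union_of_disjoint hdisjLT
    rw [h1, Nat.cast_add, hTcard, hl]
  -- sum decomposition
  have hsplit : ∑ x : V, n * (G.degree x : ℤ) =
      ∑ x ∈ Finset.univ \ S, n * (G.degree x : ℤ) + ∑ x ∈ S, n * (G.degree x : ℤ) :=
    (Finset.sum_sdiff (Finset.subset_univ S)).symm
  have hSsum : ∑ x ∈ S, n * (G.degree x : ℤ) =
      ∑ x ∈ L, n * (G.degree x : ℤ) + ∑ x ∈ T, n * (G.degree x : ℤ) := by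
    rw [hS]
    exact Finset.sum_union hdisjLT
  have hTsum : ∑ x ∈ T, n * (G.degree x : ℤ) =
      ∑ v ∈ L, ∑ u ∈ N v, n * (G.degree u : ℤ) := by
    rw [hT]
    exact Finset.sum_biUnion hpd
  -- lower bounds
  have hTlow : ∑ v ∈ L, (G.degree v : ℤ) * (4 * m + 1 - n * (G.degree v : ℤ)) ≤
      ∑ v ∈ L, ∑ u ∈ N v, n * (G.degree u : ℤ) := by
    refine Finset.sum_le_sum (fun v hv => ?_)
    have hvb := (hmemL v).mp hv
    have hbound : ∀ u ∈ N v, 4 * m + 1 - n * (G.degree v : ℤ) ≤ n * (G.degree u : ℤ) := by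
      intro u hu
      rw [hN] at hu
      simp only [SimpleGraph.mem_neighborFinset] at hu
      have huv : u ≠ v := hu.ne'
      have := H u v huv (Or.inl hu.symm)
      nlinarith [this]
    calc (G.degree v : ℤ) * (4 * m + 1 - n * (G.degree v : ℤ))
        = ∑ _u ∈ N v, (4 * m + 1 - n * (G.degree v : ℤ)) := by
          rw [Finset.sum_const, nsmul_eq_mul, hN]
          simp [SimpleGraph.card_neighborFinset_eq_degree]
      _ ≤ _ := Finset.sum_le_sum hbound
  have hRcard : ((Finset.univ \ S).card : ℤ) = n - (l + s) := by
    rw [Finset.card_sdiff_of_subset (Finset.subset_univ S),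
      Nat.cast_sub (Finset.card_le_card (Finset.subset_univ S)), Finset.card_univ,
      hScard, hn']
  have hRlow : (n - (l + s)) * (2 * m + 1) ≤ ∑ x ∈ Finset.univ \ S, n * (G.degree x : ℤ) := by
    calc (n - (l + s)) * (2 * m + 1)
        = ∑ _x ∈ Finset.univ \ S, (2 * m + 1) := by
          rw [Finset.sum_const, nsmul_eq_mul, hRcard]
      _ ≤ _ := by
          refine Finset.sum_le_sum (fun x hx => ?_)
          have hxS : x ∉ S := (Finset.mem_sdiff.mp hx).2
          have hxL : x ∉ L := fun hxL => hxS (by rw [hS]; exact Finset.mem_union_left _ hxL)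
          exact hnotL x hxL
  -- per-vertex identity and positivity
  have hident : ∑ v ∈ L, (n * (G.degree v : ℤ) +
      (G.degree v : ℤ) * (4 * m + 1 - n * (G.degree v : ℤ))) =
      (∑ v ∈ L, ((G.degree v : ℤ) - 1) * (2 * m - n * (G.degree v : ℤ)))
      + (2 * m * (s + l) + s) := by
    have step : ∀ v ∈ L, n * (G.degree v : ℤ) +
        (G.degree v : ℤ) * (4 * m + 1 - n * (G.degree v : ℤ)) =
        ((G.degree v : ℤ) - 1) * (2 * m - n * (G.degree v : ℤ))
        + (2 * m * ((G.degree v : ℤ) + 1) + (G.degree v : ℤ)) := by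
      intro v _
      ring
    rw [Finset.sum_congr rfl step, Finset.sum_add_distrib]
    congr 1
    rw [Finset.sum_add_distrib, ← Finset.mul_sum, Finset.sum_add_distrib,
      Finset.sum_const, nsmul_eq_mul, mul_one, ← hs, ← hl]
  have hP : 0 ≤ ∑ v ∈ L, ((G.degree v : ℤ) - 1) * (2 * m - n * (G.degree v : ℤ)) := by
    refine Finset.sum_nonneg (fun v hv => ?_)
    have h1 := hdegpos v
    have h2 := (hmemL v).mp hv
    nlinarith
  -- put it all together : l ≥ n
  have hmain : n ≤ l := by
    have hsum' : ∑ x : V, n * (G.degree x : ℤ) = 2 * m * n := by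
      rw [← Finset.mul_sum, hsum]; ring
    have hLsum : ∑ v ∈ L, (n * (G.degree v : ℤ)) +
        ∑ v ∈ L, ((G.degree v : ℤ) * (4 * m + 1 - n * (G.degree v : ℤ))) =
        (∑ v ∈ L, ((G.degree v : ℤ) - 1) * (2 * m - n * (G.degree v : ℤ)))
        + (2 * m * (s + l) + s) := by
      rw [← Finset.sum_add_distrib]; exact hident
    have hexp : (n - (l + s)) * (2 * m + 1) =
        2 * m * n + n - 2 * m * l - l - 2 * m * s - s := by ring
    have c1 := hsplit
    rw [hsum', hSsum, hTsum] at c1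
    -- 2mn = R + (ΣL + ΣT)
    have c2 : 2 * m * n ≥ (n - (l + s)) * (2 * m + 1) +
        (∑ v ∈ L, n * (G.degree v : ℤ) +
         ∑ v ∈ L, (G.degree v : ℤ) * (4 * m + 1 - n * (G.degree v : ℤ))) := by
      rw [c1]
      have := hRlow
      have := hTlow
      linarith
    rw [hLsum, hexp] at c2
    linarith
  -- hence every vertex is low; contradiction with an edge
  have hLuniv : L = Finset.univ := by
    apply Finset.eq_univ_of_card
    have h1 : L.card ≤ Fintype.card V := Finset.card_le_univ L
    have h2 : (Fintype.card V : ℤ) ≤ (L.card : ℤ) := by rw [← hn', ← hl]; exact hmain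
    have h2' : Fintype.card V ≤ L.card := by exact_mod_cast h2
    omega
  obtain ⟨u, v, huv⟩ := exists_edge G hconn hn
  have hu : u ∈ L := hLuniv ▸ Finset.mem_univ u
  have hv : v ∈ L := hLuniv ▸ Finset.mem_univ v
  exact (hLL u hu v hv huv.ne).1 huv


end Aux

theorem stmt_13 {V : Type*} [Fintype V] [DecidableEq V] (G : SimpleGraph V)
    [DecidableRel G.Adj] (hconn : G.Connected) (htf : G.CliqueFree 3)
    (hn : 2 ≤ Fintype.card V) (χ : ℤ)
    (hm : (G.edgeFinset.card : ℤ) ≤ 2 * ((Fintype.card V : ℤ) - χ)) :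
    (Fintype.card V : ℤ) * (G.bondageNumber + 1) ≤ 8 * ((Fintype.card V : ℤ) - χ) := by
  obtain ⟨u, v, huv, hcase, hineq⟩ := Aux.exists_good_pair G hconn hn
  have hb : G.bondageNumber ≤ G.degree u + G.degree v - 1 := by
    rcases hcase with hadj | ⟨w, h1, h2⟩
    · exact Aux.bondage_le_adj G hadj
    · by_cases hadj : G.Adj u v
      · exact Aux.bondage_le_adj G hadj
      · exact Aux.bondage_le_dist2 G huv hadj h1 h2
  have hdpos : 1 ≤ G.degree u := by
    obtain ⟨x, hx⟩ := Aux.exists_neighbor G hconn hn u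
    exact (G.degree_pos_iff_exists_adj u).mpr ⟨x, hx⟩
  have hb1 : (G.bondageNumber : ℤ) + 1 ≤ (G.degree u : ℤ) + (G.degree v : ℤ) := by
    have : G.bondageNumber + 1 ≤ G.degree u + G.degree v := by omega
    exact_mod_cast this
  have hn0 : (0 : ℤ) ≤ (Fintype.card V : ℤ) := by positivity
  calc (Fintype.card V : ℤ) * (G.bondageNumber + 1)
      ≤ (Fintype.card V : ℤ) * ((G.degree u : ℤ) + (G.degree v : ℤ)) :=
        mul_le_mul_of_nonneg_left hb1 hn0
    _ ≤ 4 * (G.edgeFinset.card : ℤ) := hineq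
    _ ≤ 8 * ((Fintype.card V : ℤ) - χ) := by linarith
end

section
/- Let G be a finite connected simple graph with n ≥ 2 vertices and m edges. If m ≤ 3n, then the bondage number satisfies b(G) ≤ 11. -/
open Finset

set_option linter.unusedSectionVars false

namespace BondageAux
open SimpleGraph

variable {V : Type*} [Fintype V] [DecidableEq V]

lemma isDominatingSet_univ (G : SimpleGraph V) : G.IsDominatingSet Finset.univ :=
  fun v hv => absurd (Finset.mem_univ v) hv

lemma exists_min_dominating (G : SimpleGraph V) :
    ∃ D : Finset V, G.IsDominatingSet D ∧ D.card = G.dominationNumber := by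
  have hne : {k | ∃ D : Finset V, G.IsDominatingSet D ∧ D.card = k}.Nonempty :=
    ⟨Finset.univ.card, Finset.univ, isDominatingSet_univ G, rfl⟩
  exact Nat.sInf_mem hne

lemma dominationNumber_le (G : SimpleGraph V) {D : Finset V} (hD : G.IsDominatingSet D) :
    G.dominationNumber ≤ D.card :=
  Nat.sInf_le ⟨D, hD, rfl⟩

lemma degree_pos (G : SimpleGraph V) [DecidableRel G.Adj] (hconn : G.Connected)
    (hn : 2 ≤ Fintype.card V) (x : V) : 0 < G.degree x := by
  obtain ⟨y, hy⟩ := Fintype.exists_ne_of_one_lt_card (by omega) x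
  obtain ⟨p⟩ := hconn.preconnected x y
  rw [SimpleGraph.degree_pos_iff_exists_adj]
  cases p with
  | nil => exact absurd rfl hy
  | cons h q => exact ⟨_, h⟩

/-- Key bondage construction: if `u ≠ v` are within distance 2 and their degree sum
is at most 12, then the bondage number is at most 11. -/
lemma key (G : SimpleGraph V) [DecidableRel G.Adj] {u v : V} (huv : u ≠ v)
    (hd : G.degree u + G.degree v ≤ 12)
    (h : G.Adj u v ∨ ∃ w, G.Adj u w ∧ G.Adj w v) :
    G.bondageNumber ≤ 11 := by
  by_cases hadj : G.Adj u v
  · -- adjacent case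
    set B : Finset (Sym2 V) := G.incidenceFinset u ∪ G.incidenceFinset v with hB
    have hBsub : ↑B ⊆ G.edgeSet := by
      intro e he
      simp only [hB, coe_union, Set.mem_union, mem_coe, mem_incidenceFinset] at he
      exact he.elim (fun h => h.1) (fun h => h.1)
    have hBcard : B.card ≤ 11 := by
      have h1 := Finset.card_union_add_card_inter (G.incidenceFinset u) (G.incidenceFinset v)
      have h2 : s(u, v) ∈ G.incidenceFinset u ∩ G.incidenceFinset v := by
        simp only [mem_inter, mem_incidenceFinset]
        exact ⟨G.mk'_mem_incidenceSet_left_iff.2 hadj, G.mk'_mem_incidenceSet_right_iff.2 hadj⟩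
      have h3 : 1 ≤ (G.incidenceFinset u ∩ G.incidenceFinset v).card := card_pos.2 ⟨_, h2⟩
      have h4 := G.card_incidenceFinset_eq_degree (v := u)
      have h5 := G.card_incidenceFinset_eq_degree (v := v)
      rw [hB]
      omega
    -- u and v are isolated in G − B
    have hiso : ∀ a : V, a = u ∨ a = v → ∀ x : V, ¬ (G.deleteEdges ↑B).Adj a x := by
      rintro a ha x hax
      rw [deleteEdges_adj] at hax
      apply hax.2
      simp only [hB, coe_union, Set.mem_union, mem_coe, mem_incidenceFinset]
      rcases ha with rfl | rfl
      · exact Or.inl (G.mk'_mem_incidenceSet_left_iff.2 hax.1)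
      · exact Or.inr (G.mk'_mem_incidenceSet_left_iff.2 hax.1)
    have hlt : G.dominationNumber < (G.deleteEdges ↑B).dominationNumber := by
      by_contra hle
      push_neg at hle
      obtain ⟨D, hDdom, hDcard⟩ := exists_min_dominating (G.deleteEdges (↑B : Set (Sym2 V)))
      have hu : u ∈ D := by
        by_contra huD
        obtain ⟨y, _, hy⟩ := hDdom u huD
        exact hiso u (Or.inl rfl) y hy.symm
      have hv : v ∈ D := by
        by_contra hvD
        obtain ⟨y, _, hy⟩ := hDdom v hvD
        exact hiso v (Or.inr rfl) y hy.symm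
      have hdom' : G.IsDominatingSet (D.erase u) := by
        intro x hx
        by_cases hxu : x = u
        · subst hxu
          exact ⟨v, mem_erase.2 ⟨Ne.symm huv, hv⟩, hadj.symm⟩
        · have hxD : x ∉ D := fun hxD => hx (mem_erase.2 ⟨hxu, hxD⟩)
          obtain ⟨y, hyD, hyx⟩ := hDdom x hxD
          have hyu : y ≠ u := by
            rintro rfl
            exact hiso y (Or.inl rfl) x hyx
          exact ⟨y, mem_erase.2 ⟨hyu, hyD⟩, (SimpleGraph.deleteEdges_adj.1 hyx).1⟩
      have hle2 := dominationNumber_le G hdom'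
      rw [card_erase_of_mem hu] at hle2
      have hpos : 0 < D.card := card_pos.2 ⟨u, hu⟩
      omega
    calc G.bondageNumber ≤ B.card := Nat.sInf_le ⟨B, hBsub, rfl, hlt⟩
      _ ≤ 11 := hBcard
  · -- nonadjacent case: common neighbor w
    obtain ⟨w, hw1, hw2⟩ := h.resolve_left hadj
    have hwu : w ≠ u := hw1.ne'
    have hwv : w ≠ v := hw2.ne
    set B : Finset (Sym2 V) :=
      G.incidenceFinset v ∪ (G.incidenceFinset u).erase s(u, w) with hB
    have hBsub : ↑B ⊆ G.edgeSet := by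
      intro e he
      simp only [hB, coe_union, Set.mem_union, mem_coe, mem_incidenceFinset, mem_erase] at he
      rcases he with h | ⟨_, h⟩
      · exact h.1
      · exact h.1
    have hBcard : B.card ≤ 11 := by
      have h1 := Finset.card_union_le (G.incidenceFinset v) ((G.incidenceFinset u).erase s(u, w))
      have h2 : s(u, w) ∈ G.incidenceFinset u := by
        rw [SimpleGraph.mem_incidenceFinset]
        exact G.mk'_mem_incidenceSet_left_iff.2 hw1
      have h3 := card_erase_of_mem h2
      have h4 := G.card_incidenceFinset_eq_degree (v := u)
      have h5 := G.card_incidenceFinset_eq_degree (v := v)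
      have h6 : 0 < G.degree u := by
        rw [SimpleGraph.degree_pos_iff_exists_adj]; exact ⟨w, hw1⟩
      rw [hB]
      omega
    -- v is isolated in G − B
    have hisov : ∀ x : V, ¬ (G.deleteEdges ↑B).Adj v x := by
      intro x hax
      rw [deleteEdges_adj] at hax
      apply hax.2
      simp only [hB, coe_union, Set.mem_union, mem_coe, mem_incidenceFinset]
      exact Or.inl (G.mk'_mem_incidenceSet_left_iff.2 hax.1)
    -- the only possible neighbor of u in G − B is w
    have huw : ∀ x : V, (G.deleteEdges ↑B).Adj u x → x = w := by
      intro x hax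
      rw [deleteEdges_adj] at hax
      by_contra hxw
      apply hax.2
      simp only [hB, coe_union, Set.mem_union, mem_coe, mem_erase, mem_incidenceFinset]
      refine Or.inr ⟨?_, G.mk'_mem_incidenceSet_left_iff.2 hax.1⟩
      intro hEq
      rw [Sym2.eq_iff] at hEq
      rcases hEq with ⟨-, h⟩ | ⟨h1, h2⟩
      · exact hxw h
      · exact hwu h1.symm
    have hlt : G.dominationNumber < (G.deleteEdges ↑B).dominationNumber := by
      by_contra hle
      push_neg at hle
      obtain ⟨D, hDdom, hDcard⟩ := exists_min_dominating (G.deleteEdges (↑B : Set (Sym2 V)))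
      have hv : v ∈ D := by
        by_contra hvD
        obtain ⟨y, _, hy⟩ := hDdom v hvD
        exact hisov y hy.symm
      by_cases hwD : w ∈ D
      · -- w ∈ D : erase v works
        have hdom' : G.IsDominatingSet (D.erase v) := by
          intro x hx
          by_cases hxv : x = v
          · subst hxv
            exact ⟨w, mem_erase.2 ⟨hwv, hwD⟩, hw2⟩
          · have hxD : x ∉ D := fun hxD => hx (mem_erase.2 ⟨hxv, hxD⟩)
            obtain ⟨y, hyD, hyx⟩ := hDdom x hxD
            have hyv : y ≠ v := by
              rintro rfl
              exact hisov x hyx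
            exact ⟨y, mem_erase.2 ⟨hyv, hyD⟩, (SimpleGraph.deleteEdges_adj.1 hyx).1⟩
        have hle2 := dominationNumber_le G hdom'
        rw [card_erase_of_mem hv] at hle2
        have hpos : 0 < D.card := card_pos.2 ⟨v, hv⟩
        omega
      · -- w ∉ D : then u ∈ D; replace u, v by w
        have hu : u ∈ D := by
          by_contra huD
          obtain ⟨y, hyD, hy⟩ := hDdom u huD
          exact hwD (huw y hy.symm ▸ hyD)
        set D' : Finset V := insert w ((D.erase u).erase v) with hD'
        have hdom' : G.IsDominatingSet D' := by
          intro x hx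
          have hxw : x ≠ w := fun h => hx (h ▸ mem_insert_self w _)
          by_cases hxu : x = u
          · subst hxu
            exact ⟨w, mem_insert_self _ _, hw1.symm⟩
          by_cases hxv : x = v
          · subst hxv
            exact ⟨w, mem_insert_self _ _, hw2⟩
          have hxD : x ∉ D := by
            intro hxD
            exact hx (mem_insert_of_mem (mem_erase.2 ⟨hxv, mem_erase.2 ⟨hxu, hxD⟩⟩))
          obtain ⟨y, hyD, hyx⟩ := hDdom x hxD
          have hyv : y ≠ v := by rintro rfl; exact hisov x hyx
          have hyu : y ≠ u := by
            rintro rfl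
            exact hxw (huw x hyx)
          exact ⟨y, mem_insert_of_mem (mem_erase.2 ⟨hyv, mem_erase.2 ⟨hyu, hyD⟩⟩),
            (SimpleGraph.deleteEdges_adj.1 hyx).1⟩
        have hle2 := dominationNumber_le G hdom'
        have hvu : v ∈ D.erase u := mem_erase.2 ⟨Ne.symm (Ne.symm huv).symm, hv⟩
        have hpos : 2 ≤ D.card := by
          have hsub : ({u, v} : Finset V) ⊆ D := by
            intro z hz
            simp only [mem_insert, mem_singleton] at hz
            rcases hz with rfl | rfl
            · exact hu
            · exact hv
          calc 2 = ({u, v} : Finset V).card := (card_pair huv).symm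
            _ ≤ D.card := card_le_card hsub
        have hcard' : D'.card ≤ D.card - 1 := by
          have hc1 : D'.card ≤ ((D.erase u).erase v).card + 1 := card_insert_le _ _
          rw [card_erase_of_mem hvu, card_erase_of_mem hu] at hc1
          omega
        have hfin : G.dominationNumber < G.dominationNumber := by
          calc G.dominationNumber ≤ D'.card := hle2
            _ ≤ D.card - 1 := hcard'
            _ < D.card := Nat.sub_lt (by omega) one_pos
            _ = (G.deleteEdges ↑B).dominationNumber := hDcard
            _ ≤ G.dominationNumber := hle
        exact absurd hfin (lt_irrefl _)
    calc G.bondageNumber ≤ B.card := Nat.sInf_le ⟨B, hBsub, rfl, hlt⟩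
      _ ≤ 11 := hBcard

/-- Counting argument: in a graph with min degree ≥ 1 and few edges, there are two distinct
vertices within distance 2 with a small degree sum. -/
lemma exists_close_pair (G : SimpleGraph V) [DecidableRel G.Adj]
    (hdeg : ∀ x : V, 0 < G.degree x) (hn : 2 ≤ Fintype.card V)
    (hm : G.edgeFinset.card ≤ 3 * Fintype.card V) :
    ∃ u v : V, u ≠ v ∧ G.degree u + G.degree v ≤ 12 ∧
      (G.Adj u v ∨ ∃ w, G.Adj u w ∧ G.Adj w v) := by
  by_contra hcon
  push_neg at hcon
  have hkey : ∀ u v : V, u ≠ v → (G.Adj u v ∨ ∃ w, G.Adj u w ∧ G.Adj w v) →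
      13 ≤ G.degree u + G.degree v := by
    intro u v h1 h2
    by_contra hlt
    push_neg at hlt
    have hc := hcon u v h1 (by omega)
    rcases h2 with h2 | ⟨w, hw1, hw2⟩
    · exact hc.1 h2
    · exact hc.2 w hw1 hw2
  set S : Finset V := Finset.univ.filter (fun x => G.degree x ≤ 6) with hS
  set block : V → Finset V := fun v => insert v (G.neighborFinset v) with hblock
  have hdisj : ∀ a ∈ S, ∀ b ∈ S, a ≠ b → Disjoint (block a) (block b) := by
    intro a ha b hb hab
    rw [Finset.disjoint_left]
    intro x hxa hxb
    have hda : G.degree a ≤ 6 := (Finset.mem_filter.mp ha).2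
    have hdb : G.degree b ≤ 6 := (Finset.mem_filter.mp hb).2
    simp only [hblock, Finset.mem_insert, SimpleGraph.mem_neighborFinset] at hxa hxb
    have h13 : 13 ≤ G.degree a + G.degree b := by
      rcases hxa with rfl | hxa
      · rcases hxb with rfl | hxb
        · exact absurd rfl hab
        · exact hkey x b hab (Or.inl hxb.symm)
      · rcases hxb with rfl | hxb
        · exact hkey a x hab (Or.inl hxa)
        · exact hkey a b hab (Or.inr ⟨x, hxa, hxb.symm⟩)
    omega
  set T : Finset V := S.biUnion block with hT
  have hblockcard : ∀ v : V, (block v).card = 1 + G.degree v := by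
    intro v
    rw [hblock]
    simp only []
    rw [Finset.card_insert_of_notMem (G.notMem_neighborFinset_self v)]
    rw [G.card_neighborFinset_eq_degree]
    omega
  have hinner : ∀ v ∈ S, 7 * (block v).card ≤ (∑ x ∈ block v, G.degree x) + 1 := by
    intro v hv
    have hv6 : G.degree v ≤ 6 := (Finset.mem_filter.mp hv).2
    have hv1 : 1 ≤ G.degree v := hdeg v
    have hsum : ∑ x ∈ block v, G.degree x
        = G.degree v + ∑ w ∈ G.neighborFinset v, G.degree w := by
      rw [hblock]
      exact Finset.sum_insert (G.notMem_neighborFinset_self v)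
    have hnb : ∀ w ∈ G.neighborFinset v, 13 - G.degree v ≤ G.degree w := by
      intro w hw
      have hadj : G.Adj v w := (SimpleGraph.mem_neighborFinset _ _ _).mp hw
      have := hkey v w hadj.ne (Or.inl hadj)
      omega
    have hlow : (G.neighborFinset v).card • (13 - G.degree v)
        ≤ ∑ w ∈ G.neighborFinset v, G.degree w :=
      Finset.card_nsmul_le_sum _ _ _ hnb
    rw [G.card_neighborFinset_eq_degree, smul_eq_mul] at hlow
    rw [hblockcard v, hsum]
    set k := G.degree v
    interval_cases k <;> omega
  have hTsum : 7 * T.card ≤ (∑ x ∈ T, G.degree x) + S.card := by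
    have e1 : T.card = ∑ v ∈ S, (block v).card := Finset.card_biUnion hdisj
    have e2 : ∑ x ∈ T, G.degree x = ∑ v ∈ S, ∑ x ∈ block v, G.degree x := by
      rw [hT]
      refine Finset.sum_biUnion ?_
      intro a ha b hb hab
      exact hdisj a ha b hb hab
    rw [e1, e2, Finset.mul_sum]
    calc ∑ v ∈ S, 7 * (block v).card ≤ ∑ v ∈ S, ((∑ x ∈ block v, G.degree x) + 1) :=
          Finset.sum_le_sum hinner
      _ = (∑ v ∈ S, ∑ x ∈ block v, G.degree x) + S.card := by
          rw [Finset.sum_add_distrib, Finset.sum_const, smul_eq_mul, mul_one]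
  have hout : 7 * (Fintype.card V - T.card) ≤ ∑ x ∈ Finset.univ \ T, G.degree x := by
    have h7 : ∀ x ∈ Finset.univ \ T, 7 ≤ G.degree x := by
      intro x hx
      rw [Finset.mem_sdiff] at hx
      by_contra hlt
      push_neg at hlt
      have hxS : x ∈ S := Finset.mem_filter.2 ⟨Finset.mem_univ x, by omega⟩
      exact hx.2 (Finset.mem_biUnion.2 ⟨x, hxS, Finset.mem_insert_self x _⟩)
    have := Finset.card_nsmul_le_sum _ _ _ h7
    rwa [Finset.card_sdiff_of_subset (Finset.subset_univ T), Finset.card_univ, smul_eq_mul,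
      Nat.mul_comm] at this
  have htotal : (∑ x ∈ T, G.degree x) + (∑ x ∈ Finset.univ \ T, G.degree x)
      = 2 * G.edgeFinset.card := by
    rw [← G.sum_degrees_eq_twice_card_edges]
    rw [add_comm]
    exact Finset.sum_sdiff (Finset.subset_univ T)
  have hS2 : 2 * S.card ≤ T.card := by
    have e1 : T.card = ∑ v ∈ S, (block v).card := Finset.card_biUnion hdisj
    have h2 : ∀ v ∈ S, 2 ≤ (block v).card := by
      intro v _
      rw [hblockcard v]
      have := hdeg v
      omega
    have := Finset.card_nsmul_le_sum _ _ _ h2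
    rw [smul_eq_mul, Nat.mul_comm] at this
    omega
  have hTn : T.card ≤ Fintype.card V := by
    rw [← Finset.card_univ]
    exact Finset.card_le_card (Finset.subset_univ T)
  omega

end BondageAux

theorem stmt_19 {V : Type*} [Fintype V] [DecidableEq V] (G : SimpleGraph V)
    [DecidableRel G.Adj] (hconn : G.Connected) (hn : 2 ≤ Fintype.card V)
    (hm : G.edgeFinset.card ≤ 3 * Fintype.card V) :
    G.bondageNumber ≤ 11 := by
  have hdeg : ∀ x : V, 0 < G.degree x := BondageAux.degree_pos G hconn hn
  obtain ⟨u, v, huv, hd, h⟩ := BondageAux.exists_close_pair G hdeg hn hm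
  exact BondageAux.key G huv hd h
end
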